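/- Fix V > 0 and for B > 0 let λ*₁(B) := (4V/π)·[1 − 4I₂(√B)/(√B·I₁(√B))]^{−1} and h₁*(B;r) := (λ*₁(B)/2)(1 − r²) − (λ*₁(B)/(√B·I₁(√B)))·[I₀(√B) − I₀(√B·r)]. Then for every r ∈ [0,1], h₁*(B;r) → (2V/π)(1 − r²) as B → ∞. -/
import Mathlib

/-- Modified Bessel function of the first kind of (natural) order `n`,
`I_n(x) = sum_k (x/2)^(2k+n) / (k! * Gamma (k+n+1))`. -/
noncomputable def besselI (n : ℕ) (x : ℝ) : ℝ :=
  ∑' k : ℕ, (x / 2) ^ (2 * k + n) / ((k.factorial : ℝ) * Real.Gamma (k + n + 1))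

/-- The squared maximal sloshing frequency lambda*1(B) for m = 1 with surface tension. -/
noncomputable def lamStarR1 (V B : ℝ) : ℝ :=
  (4 * V / Real.pi) * (1 - 4 * besselI 2 (Real.sqrt B) /
    (Real.sqrt B * besselI 1 (Real.sqrt B)))⁻¹

/-- The optimal radial container profile h1*(B; r) for m = 1 with surface tension. -/
noncomputable def hStarR1 (V B r : ℝ) : ℝ :=
  lamStarR1 V B / 2 * (1 - r ^ 2) -
    lamStarR1 V B / (Real.sqrt B * besselI 1 (Real.sqrt B)) *
      (besselI 0 (Real.sqrt B) - besselI 0 (Real.sqrt B * r))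

namespace BesselAux

/-- series term of `besselI` with factorials -/
noncomputable def bT (n : ℕ) (x : ℝ) (k : ℕ) : ℝ :=
  (x / 2) ^ (2 * k + n) / ((k.factorial : ℝ) * ((k + n).factorial : ℝ))

lemma besselI_eq (n : ℕ) (x : ℝ) : besselI n x = ∑' k, bT n x k := by
  unfold besselI bT
  congr 1
  ext k
  have h : ((k : ℝ) + n + 1) = ((k + n : ℕ) : ℝ) + 1 := by push_cast; ring
  rw [h, Real.Gamma_nat_eq_factorial]

lemma bT_nonneg (n : ℕ) {x : ℝ} (hx : 0 ≤ x) (k : ℕ) : 0 ≤ bT n x k := by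
  unfold bT; positivity

set_option maxHeartbeats 1000000 in
lemma summable_bT (n : ℕ) {x : ℝ} (hx : 0 ≤ x) : Summable (bT n x) := by
  apply Summable.of_nonneg_of_le (bT_nonneg n hx)
    (f := fun k => (x / 2) ^ n * (((x / 2) ^ 2) ^ k / (k.factorial : ℝ)))
  · intro k
    unfold bT
    have hpow : (x / 2) ^ (2 * k + n) = (x / 2) ^ n * ((x / 2) ^ 2) ^ k := by
      rw [← pow_mul, ← pow_add]
      congr 1
      omega
    have h1 : (1 : ℝ) ≤ ((k + n).factorial : ℝ) := by
      exact_mod_cast Nat.one_le_iff_ne_zero.mpr (Nat.factorial_ne_zero _)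
    have hk : (0 : ℝ) < (k.factorial : ℝ) := by exact_mod_cast Nat.factorial_pos k
    rw [hpow, mul_div_assoc]
    refine mul_le_mul_of_nonneg_left ?_ (by positivity)
    have hden : (k.factorial : ℝ) ≤ (k.factorial : ℝ) * ((k + n).factorial : ℝ) :=
      le_mul_of_one_le_right hk.le h1
    exact div_le_div_of_nonneg_left (by positivity) hk hden
  · exact (Real.summable_pow_div_factorial ((x / 2) ^ 2)).mul_left _

lemma besselI_nonneg (n : ℕ) {x : ℝ} (hx : 0 ≤ x) : 0 ≤ besselI n x := by
  rw [besselI_eq]; exact tsum_nonneg (bT_nonneg n hx)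

lemma besselI_one_pos {x : ℝ} (hx : 0 < x) : 0 < besselI 1 x := by
  rw [besselI_eq]
  refine Summable.tsum_pos (summable_bT 1 hx.le) (bT_nonneg 1 hx.le) 0 ?_
  unfold bT
  norm_num
  positivity

/-- key termwise estimate: I₂ term k ≤ I₁ term k + I₁ term (k+1). -/
lemma bT_two_le (x : ℝ) (hx : 0 ≤ x) (k : ℕ) :
    bT 2 x k ≤ bT 1 x k + bT 1 x (k + 1) := by
  unfold bT
  set t := x / 2 with ht
  have ht0 : 0 ≤ t := by positivity
  have hA : (0 : ℝ) < (k.factorial : ℝ) := by exact_mod_cast Nat.factorial_pos k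
  have hBe : ((k + 1).factorial : ℝ) = ((k : ℝ) + 1) * (k.factorial : ℝ) := by
    push_cast [Nat.factorial_succ]; ring
  have hCe : ((k + 2).factorial : ℝ) = ((k : ℝ) + 2) * ((k + 1).factorial : ℝ) := by
    have : k + 2 = (k + 1) + 1 := rfl
    rw [this]
    push_cast [Nat.factorial_succ]; ring
  set u := t ^ (2 * k + 1) with hu
  have hu0 : 0 ≤ u := by positivity
  have p2 : t ^ (2 * k + 2) = u * t := by
    rw [hu, show 2 * k + 2 = (2 * k + 1) + 1 from by omega, pow_succ]
  have p3 : t ^ (2 * (k + 1) + 1) = u * t ^ 2 := by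
    rw [hu, show 2 * (k + 1) + 1 = (2 * k + 1) + 2 from by omega, pow_add]
  have e1 : k + 1 + 1 = k + 2 := rfl
  rw [p2, p3, e1]
  have key : t * ((k : ℝ) + 1) ≤ ((k : ℝ) + 1) * ((k : ℝ) + 2) + t ^ 2 := by
    nlinarith [sq_nonneg (t - ((k : ℝ) + 1))]
  have frac : t / ((k.factorial : ℝ) * ((k + 2).factorial : ℝ)) ≤
      1 / ((k.factorial : ℝ) * ((k + 1).factorial : ℝ)) +
      t ^ 2 / (((k + 1).factorial : ℝ) * ((k + 2).factorial : ℝ)) := by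
    have hB : (0 : ℝ) < ((k + 1).factorial : ℝ) := by exact_mod_cast Nat.factorial_pos _
    rw [div_add_div _ _ (by positivity) (by positivity),
      div_le_div_iff₀ (by positivity) (by positivity), hCe, hBe]
    nlinarith [mul_le_mul_of_nonneg_right key
        (by positivity : (0:ℝ) ≤ ((k : ℝ) + 1) ^ 2 * ((k : ℝ) + 2) *
          ((k.factorial : ℝ) * (k.factorial : ℝ) * ((k.factorial : ℝ) * (k.factorial : ℝ))))]
  calc u * t / ((k.factorial : ℝ) * ((k + 2).factorial : ℝ))
      = u * (t / ((k.factorial : ℝ) * ((k + 2).factorial : ℝ))) := by ring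
    _ ≤ u * (1 / ((k.factorial : ℝ) * ((k + 1).factorial : ℝ)) +
        t ^ 2 / (((k + 1).factorial : ℝ) * ((k + 2).factorial : ℝ))) :=
        mul_le_mul_of_nonneg_left frac hu0
    _ = u / ((k.factorial : ℝ) * ((k + 1).factorial : ℝ)) +
        u * t ^ 2 / (((k + 1).factorial : ℝ) * ((k + 2).factorial : ℝ)) := by ring

/-- key termwise estimate: I₀ term (k+1) ≤ 2·(I₁ term (k+1)) + I₁ term k. -/
lemma bT_zero_le (x : ℝ) (hx : 0 ≤ x) (k : ℕ) :
    bT 0 x (k + 1) ≤ 2 * bT 1 x (k + 1) + bT 1 x k := by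
  unfold bT
  set t := x / 2 with ht
  have ht0 : 0 ≤ t := by positivity
  have hA : (0 : ℝ) < (k.factorial : ℝ) := by exact_mod_cast Nat.factorial_pos k
  have hBe : ((k + 1).factorial : ℝ) = ((k : ℝ) + 1) * (k.factorial : ℝ) := by
    push_cast [Nat.factorial_succ]; ring
  have hCe : ((k + 2).factorial : ℝ) = ((k : ℝ) + 2) * ((k + 1).factorial : ℝ) := by
    have : k + 2 = (k + 1) + 1 := rfl
    rw [this]
    push_cast [Nat.factorial_succ]; ring
  set u := t ^ (2 * k + 1) with hu
  have hu0 : 0 ≤ u := by positivity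
  have p2 : t ^ (2 * (k + 1) + 0) = u * t := by
    rw [hu, show 2 * (k + 1) + 0 = (2 * k + 1) + 1 from by omega, pow_succ]
  have p3 : t ^ (2 * (k + 1) + 1) = u * t ^ 2 := by
    rw [hu, show 2 * (k + 1) + 1 = (2 * k + 1) + 2 from by omega, pow_add]
  have e1 : k + 1 + 1 = k + 2 := rfl
  have e0 : k + 1 + 0 = k + 1 := rfl
  rw [p2, p3, e1, e0]
  have key : t * ((k : ℝ) + 2) ≤ 2 * t ^ 2 + ((k : ℝ) + 1) * ((k : ℝ) + 2) := by
    nlinarith [sq_nonneg (t - ((k : ℝ) + 2))]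
  have frac : t / (((k + 1).factorial : ℝ) * ((k + 1).factorial : ℝ)) ≤
      2 * (t ^ 2 / (((k + 1).factorial : ℝ) * ((k + 2).factorial : ℝ))) +
      1 / ((k.factorial : ℝ) * ((k + 1).factorial : ℝ)) := by
    have hB : (0 : ℝ) < ((k + 1).factorial : ℝ) := by exact_mod_cast Nat.factorial_pos _
    rw [mul_div_assoc' 2, div_add_div _ _ (by positivity) (by positivity),
      div_le_div_iff₀ (by positivity) (by positivity), hCe, hBe]
    nlinarith [mul_le_mul_of_nonneg_right key
        (by positivity : (0:ℝ) ≤ ((k : ℝ) + 1) ^ 3 *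
          ((k.factorial : ℝ) * (k.factorial : ℝ) * ((k.factorial : ℝ) * (k.factorial : ℝ))))]
  calc u * t / (((k + 1).factorial : ℝ) * ((k + 1).factorial : ℝ))
      = u * (t / (((k + 1).factorial : ℝ) * ((k + 1).factorial : ℝ))) := by ring
    _ ≤ u * (2 * (t ^ 2 / (((k + 1).factorial : ℝ) * ((k + 2).factorial : ℝ))) +
        1 / ((k.factorial : ℝ) * ((k + 1).factorial : ℝ))) :=
        mul_le_mul_of_nonneg_left frac hu0
    _ = 2 * (u * t ^ 2 / (((k + 1).factorial : ℝ) * ((k + 2).factorial : ℝ))) +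
        u / ((k.factorial : ℝ) * ((k + 1).factorial : ℝ)) := by ring

lemma tsum_shift_le {x : ℝ} (hx : 0 ≤ x) :
    ∑' k, bT 1 x (k + 1) ≤ besselI 1 x := by
  rw [besselI_eq, Summable.tsum_eq_zero_add (summable_bT 1 hx)]
  have : 0 ≤ bT 1 x 0 := bT_nonneg 1 hx 0
  linarith

lemma summable_shift (n : ℕ) {x : ℝ} (hx : 0 ≤ x) :
    Summable (fun k => bT n x (k + 1)) :=
  (summable_nat_add_iff 1).mpr (summable_bT n hx)

lemma besselI_two_le {x : ℝ} (hx : 0 ≤ x) : besselI 2 x ≤ 2 * besselI 1 x := by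
  rw [besselI_eq 2]
  have h1 : ∑' k, bT 2 x k ≤ ∑' k, (bT 1 x k + bT 1 x (k + 1)) :=
    Summable.tsum_le_tsum (bT_two_le x hx) (summable_bT 2 hx)
      ((summable_bT 1 hx).add (summable_shift 1 hx))
  rw [Summable.tsum_add (summable_bT 1 hx) (summable_shift 1 hx)] at h1
  have h2 := tsum_shift_le hx
  rw [besselI_eq 1] at *
  linarith

lemma besselI_zero_le {x : ℝ} (hx : 2 ≤ x) : besselI 0 x ≤ 4 * besselI 1 x := by
  have hx0 : (0 : ℝ) ≤ x := by linarith
  have hone : (1 : ℝ) ≤ besselI 1 x := by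
    have := Summable.le_tsum (summable_bT 1 hx0) 0 (fun j _ => bT_nonneg 1 hx0 j)
    have hb0 : bT 1 x 0 = x / 2 := by
      unfold bT; norm_num
    rw [besselI_eq 1]
    calc (1 : ℝ) ≤ x / 2 := by linarith
      _ = bT 1 x 0 := hb0.symm
      _ ≤ _ := this
  rw [besselI_eq 0, Summable.tsum_eq_zero_add (summable_bT 0 hx0)]
  have hb00 : bT 0 x 0 = 1 := by unfold bT; norm_num
  rw [hb00]
  have h1 : ∑' k, bT 0 x (k + 1) ≤ ∑' k, (2 * bT 1 x (k + 1) + bT 1 x k) :=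
    Summable.tsum_le_tsum (bT_zero_le x hx0) (summable_shift 0 hx0)
      (((summable_shift 1 hx0).mul_left 2).add (summable_bT 1 hx0))
  rw [Summable.tsum_add ((summable_shift 1 hx0).mul_left 2) (summable_bT 1 hx0),
    tsum_mul_left] at h1
  have h2 := tsum_shift_le hx0
  have h3 : ∑' k, bT 1 x k = besselI 1 x := (besselI_eq 1 x).symm
  linarith

lemma besselI_zero_mono {y x : ℝ} (hy : 0 ≤ y) (hyx : y ≤ x) :
    besselI 0 y ≤ besselI 0 x := by
  rw [besselI_eq, besselI_eq]
  refine Summable.tsum_le_tsum (fun k => ?_) (summable_bT 0 hy) (summable_bT 0 (hy.trans hyx))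
  unfold bT
  apply div_le_div_of_nonneg_right ?_ (by positivity)
  exact pow_le_pow_left₀ (by positivity) (by linarith) _

lemma tendsto_sqrt_atTop : Filter.Tendsto Real.sqrt Filter.atTop Filter.atTop := by
  rw [Filter.tendsto_atTop_atTop]
  intro b
  refine ⟨b ^ 2, fun a ha => ?_⟩
  rcases le_or_gt b 0 with hb | hb
  · exact hb.trans (Real.sqrt_nonneg a)
  · calc b = Real.sqrt (b ^ 2) := (Real.sqrt_sq hb.le).symm
      _ ≤ Real.sqrt a := Real.sqrt_le_sqrt ha

end BesselAux

theorem hStarR1_zero_surface_tension_limit (V : ℝ) (hV : 0 < V)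
    (r : ℝ) (hr : r ∈ Set.Icc (0 : ℝ) 1) :
    Filter.Tendsto (fun B => hStarR1 V B r) Filter.atTop
      (nhds (2 * V / Real.pi * (1 - r ^ 2))) := by
  obtain ⟨hr0, hr1⟩ := hr
  set s : ℝ → ℝ := Real.sqrt with hs
  -- eventually, √B ≥ 2
  have hev : ∀ᶠ B in Filter.atTop, (2 : ℝ) ≤ Real.sqrt B :=
    BesselAux.tendsto_sqrt_atTop.eventually_ge_atTop 2
  -- the epsilon quantity
  set ε : ℝ → ℝ := fun B => 4 * besselI 2 (Real.sqrt B) /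
      (Real.sqrt B * besselI 1 (Real.sqrt B)) with hε
  have hdivto : Filter.Tendsto (fun B : ℝ => (8 : ℝ) / Real.sqrt B)
      Filter.atTop (nhds 0) :=
    Filter.Tendsto.div_atTop tendsto_const_nhds BesselAux.tendsto_sqrt_atTop
  have hεnonneg : ∀ᶠ B in Filter.atTop, 0 ≤ ε B := by
    filter_upwards [hev] with B hB
    have h2 : (0 : ℝ) < Real.sqrt B := by linarith
    have := BesselAux.besselI_one_pos h2
    have := BesselAux.besselI_nonneg 2 h2.le
    positivity
  have hεle : ∀ᶠ B in Filter.atTop, ε B ≤ 8 / Real.sqrt B := by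
    filter_upwards [hev] with B hB
    have h2 : (0 : ℝ) < Real.sqrt B := by linarith
    have hI1 := BesselAux.besselI_one_pos h2
    have hI2 := BesselAux.besselI_two_le h2.le
    rw [hε, div_le_div_iff₀ (by positivity) h2]
    nlinarith
  have hεto : Filter.Tendsto ε Filter.atTop (nhds 0) :=
    squeeze_zero' hεnonneg hεle hdivto
  have hlam : Filter.Tendsto (fun B => lamStarR1 V B) Filter.atTop
      (nhds (4 * V / Real.pi)) := by
    have h1 : Filter.Tendsto (fun B => (1 - ε B)⁻¹) Filter.atTop (nhds 1) := by
      have h2 : Filter.Tendsto (fun B => 1 - ε B) Filter.atTop (nhds 1) := by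
        have h3 : Filter.Tendsto (fun B => (1 : ℝ) - ε B) Filter.atTop (nhds (1 - 0)) :=
          tendsto_const_nhds.sub hεto
        rwa [sub_zero] at h3
      have := h2.inv₀ (by norm_num)
      simpa using this
    have h4 : Filter.Tendsto (fun B : ℝ => (4 * V / Real.pi) * (1 - ε B)⁻¹)
        Filter.atTop (nhds ((4 * V / Real.pi) * 1)) := tendsto_const_nhds.mul h1
    rw [mul_one] at h4
    exact h4
  -- the correction quantity
  set c : ℝ → ℝ := fun B => (besselI 0 (Real.sqrt B) - besselI 0 (Real.sqrt B * r)) /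
      (Real.sqrt B * besselI 1 (Real.sqrt B)) with hc
  have hcnonneg : ∀ᶠ B in Filter.atTop, 0 ≤ c B := by
    filter_upwards [hev] with B hB
    have h2 : (0 : ℝ) < Real.sqrt B := by linarith
    have hI1 := BesselAux.besselI_one_pos h2
    have hmono := BesselAux.besselI_zero_mono (by positivity : 0 ≤ Real.sqrt B * r)
      (by nlinarith : Real.sqrt B * r ≤ Real.sqrt B)
    have : 0 ≤ besselI 0 (Real.sqrt B) - besselI 0 (Real.sqrt B * r) := by linarith
    positivity
  have hcle : ∀ᶠ B in Filter.atTop, c B ≤ 4 / Real.sqrt B := by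
    filter_upwards [hev] with B hB
    have h2 : (0 : ℝ) < Real.sqrt B := by linarith
    have hI1 := BesselAux.besselI_one_pos h2
    have hI0 := BesselAux.besselI_zero_le hB
    have hnn := BesselAux.besselI_nonneg 0 (by positivity : (0:ℝ) ≤ Real.sqrt B * r)
    rw [hc, div_le_div_iff₀ (by positivity) h2]
    nlinarith
  have hdivto4 : Filter.Tendsto (fun B : ℝ => (4 : ℝ) / Real.sqrt B)
      Filter.atTop (nhds 0) :=
    Filter.Tendsto.div_atTop tendsto_const_nhds BesselAux.tendsto_sqrt_atTop
  have hcto : Filter.Tendsto c Filter.atTop (nhds 0) :=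
    squeeze_zero' hcnonneg hcle hdivto4
  have heq : ∀ B, hStarR1 V B r =
      lamStarR1 V B / 2 * (1 - r ^ 2) - lamStarR1 V B * c B := by
    intro B
    unfold hStarR1
    rw [hc]
    ring
  have hfinal : Filter.Tendsto
      (fun B => lamStarR1 V B / 2 * (1 - r ^ 2) - lamStarR1 V B * c B)
      Filter.atTop
      (nhds ((4 * V / Real.pi) / 2 * (1 - r ^ 2) - (4 * V / Real.pi) * 0)) :=
    (((hlam.div_const 2).mul_const (1 - r ^ 2))).sub (hlam.mul hcto)
  have hval : (4 * V / Real.pi) / 2 * (1 - r ^ 2) - (4 * V / Real.pi) * 0 =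
      2 * V / Real.pi * (1 - r ^ 2) := by ring
  rw [hval] at hfinal
  simpa [heq] using hfinal
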